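/- arXiv:1804.07456 — 2 statements merged into one kernel-verified Lean document; each statement's English description precedes it below -/
import Mathlib

section
/- Let (X, d_X) be a metric space admitting a (t, Δ, δ)-decomposition, and let N ⊆ X with |N| = n ≥ 2. Then there exists a set {P_1, ..., P_φ} of t·Δ-bounded partitions of N, where φ = ⌈(2 ln n)/δ⌉, such that every pair x, y ∈ N with d_X(x,y) ≤ Δ is clustered together (i.e., lies in the same cluster) by at least one of the partitions P_i. -/
open MeasureTheory

noncomputable section

/-- The distance function on unordered pairs of points. -/
def symDist {X : Type*} [MetricSpace X] : Sym2 X → ℝ :=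
  Sym2.lift ⟨fun a b => dist a b, fun a b => dist_comm a b⟩

/-- The weight of a walk: the sum of the metric distances along its edges. -/
def walkWeight {X : Type*} [MetricSpace X] {G : SimpleGraph X} {u v : X}
    (p : G.Walk u v) : ℝ :=
  (p.edges.map symDist).sum

/-- Shortest-path distance in a graph whose edges are weighted by the metric. -/
def spannerDist {X : Type*} [MetricSpace X] (G : SimpleGraph X) (u v : X) : ℝ :=
  sInf {c | ∃ p : G.Walk u v, walkWeight p = c}

/-- `G` is a `t`-spanner of the metric space `X`. -/
def IsSpanner {X : Type*} [MetricSpace X] (G : SimpleGraph X) (t : ℝ) : Prop :=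
  ∀ u v : X, dist u v ≤ spannerDist G u v ∧ spannerDist G u v ≤ t * dist u v

/-- Total weight of a graph over a finite metric space. -/
def graphWeight {X : Type*} [MetricSpace X] [Fintype X] (G : SimpleGraph X) : ℝ :=
  ∑ e ∈ G.edgeSet.toFinite.toFinset, symDist e

/-- Number of edges of a graph. -/
def edgeCount {X : Type*} (G : SimpleGraph X) : ℕ :=
  Nat.card G.edgeSet

/-- Weight of a minimum spanning tree of a finite metric space: the minimum total
weight of a connected graph on `X`. -/
def mstWeight (X : Type*) [MetricSpace X] [Fintype X] : ℝ :=
  sInf {c | ∃ G : SimpleGraph X, G.Connected ∧ graphWeight G = c}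

/-- `D` is a `(t, Δ, δ)`-decomposition of the metric space `X`. -/
def IsDecomposition {X : Type*} [MetricSpace X] (t Δ δ : ℝ) (D : PMF (Setoid X)) : Prop :=
  (∀ P ∈ D.support, ∀ x y : X, P.r x y → dist x y ≤ t * Δ) ∧
  (∀ x y : X, dist x y ≤ Δ → ENNReal.ofReal δ ≤ D.toOuterMeasure {P | P.r x y})

/-- A metric space `X` is `(t, δ)`-decomposable. -/
def IsDecomposable (X : Type*) [MetricSpace X] (t δ : ℝ) : Prop :=
  ∀ Δ : ℝ, 0 < Δ → ∃ D : PMF (Setoid X), IsDecomposition t Δ δ D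

/-- `X` has doubling constant `lam`. -/
def HasDoublingConstant (X : Type*) [MetricSpace X] (lam : ℕ) : Prop :=
  ∀ (x : X) (r : ℝ), 0 < r → ∃ F : Finset X, F.card ≤ lam ∧
    Metric.closedBall x (2 * r) ⊆ ⋃ y ∈ F, Metric.closedBall y r

/-- Weight of a walk in a weighted graph. -/
def wWalkWeight {V : Type*} {G : SimpleGraph V} (w : Sym2 V → ℝ) {u v : V}
    (p : G.Walk u v) : ℝ :=
  (p.edges.map w).sum

/-- Shortest-path distance in a weighted graph. -/
def wDist {V : Type*} (G : SimpleGraph V) (w : Sym2 V → ℝ) (u v : V) : ℝ :=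
  sInf {c | ∃ p : G.Walk u v, wWalkWeight w p = c}

/-- Total edge weight of a weighted graph. -/
def wGraphWeight {V : Type*} [Fintype V] (G : SimpleGraph V) (w : Sym2 V → ℝ) : ℝ :=
  ∑ e ∈ G.edgeSet.toFinite.toFinset, w e

/-- Weight of a minimum spanning tree of a weighted graph `G`: the least total weight
of a connected spanning subgraph of `G`. -/
def wMstWeight {V : Type*} [Fintype V] (G : SimpleGraph V) (w : Sym2 V → ℝ) : ℝ :=
  sInf {c | ∃ T : SimpleGraph V, T ≤ G ∧ T.Connected ∧ wGraphWeight T w = c}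

/-- The setoid of elements lying on the same cycle of a permutation. -/
def sameCycleSetoid {α : Type*} (σ : Equiv.Perm α) : Setoid α :=
  ⟨σ.SameCycle, ⟨fun x => Equiv.Perm.SameCycle.refl σ x,
    fun h => h.symm, fun h₁ h₂ => h₁.trans h₂⟩⟩

/-- The number of cycles (orbits) of a permutation. -/
def numCycles {α : Type*} (σ : Equiv.Perm α) : ℕ :=
  Nat.card (Quotient (sameCycleSetoid σ))

/-- The dart-reversal permutation of a graph. -/
def dartReversal {V : Type*} (G : SimpleGraph V) : Equiv.Perm G.Dart :=
  Function.Involutive.toPerm SimpleGraph.Dart.symm SimpleGraph.Dart.symm_involutive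

/-- `σ` is a rotation system of `G`: it permutes darts, preserves tails, and is a single
cycle on the darts emanating from each fixed vertex. -/
def IsRotationSystem {V : Type*} (G : SimpleGraph V) (σ : Equiv.Perm G.Dart) : Prop :=
  (∀ d : G.Dart, (σ d).toProd.1 = d.toProd.1) ∧
  (∀ d e : G.Dart, d.toProd.1 = e.toProd.1 → σ.SameCycle d e)

/-- `G` has (orientable) genus at most `g`: some rotation system, whose number of faces
is the number of cycles of the face permutation `σ * dartReversal G`, satisfies Euler's
formula `V - E + F ≥ 2 - 2g`. -/
def GenusLE {V : Type*} [Fintype V] (G : SimpleGraph V) (g : ℕ) : Prop :=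
  ∃ σ : Equiv.Perm G.Dart, IsRotationSystem G σ ∧
    (2 : ℤ) - 2 * (g : ℤ) ≤
      (Fintype.card V : ℤ) - (Nat.card G.edgeSet : ℤ) + (numCycles (σ * dartReversal G) : ℤ)

/-- `D` is a `(t, Δ, δ)`-strong-decomposition of the weighted graph `(G, w)`: clusters
have strong diameter at most `t·Δ`, and pairs at distance at most `Δ` are clustered
together with probability at least `δ`. -/
def IsStrongDecomposition {V : Type*} (G : SimpleGraph V) (w : Sym2 V → ℝ)
    (t Δ δ : ℝ) (D : PMF (Setoid V)) : Prop :=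
  (∀ P ∈ D.support, ∀ u v : V, P.r u v →
      ∃ p : G.Walk u v, (∀ z ∈ p.support, P.r u z) ∧ wWalkWeight w p ≤ t * Δ) ∧
  (∀ u v : V, wDist G w u v ≤ Δ → ENNReal.ofReal δ ≤ D.toOuterMeasure {P | P.r u v})

/-- A weighted graph is `(t, δ)`-strongly-decomposable. -/
def IsStronglyDecomposable {V : Type*} (G : SimpleGraph V) (w : Sym2 V → ℝ)
    (t δ : ℝ) : Prop :=
  ∀ Δ : ℝ, 0 < Δ → ∃ D : PMF (Setoid V), IsStrongDecomposition G w t Δ δ D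

/-- `D` is an `(r, cr, p₁, p₂)`-sensitive LSH family for `X`. -/
def IsLSHFamily {X : Type*} {U : Type*} [MetricSpace X] (D : PMF (X → U))
    (r cr p₁ p₂ : ℝ) : Prop :=
  (∀ x y : X, dist x y ≤ r → ENNReal.ofReal p₁ ≤ D.toOuterMeasure {h | h x = h y}) ∧
  (∀ x y : X, cr < dist x y → D.toOuterMeasure {h | h x = h y} ≤ ENNReal.ofReal p₂)

end

/-- If `(X, d)` admits a `(t, Δ, δ)`-decomposition and `N ⊆ X` has `n ≥ 2`
points, then there are `φ = ⌈2 ln n / δ⌉` many `t·Δ`-bounded partitions of `N` such that every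
pair `x, y ∈ N` at distance at most `Δ` is clustered together by at least one partition. -/
theorem covering_using_decompositions
    {X : Type*} [MetricSpace X] (t Δ δ : ℝ) (ht : 1 ≤ t) (hΔ : 0 < Δ)
    (hδ0 : 0 < δ) (hδ1 : δ ≤ 1)
    (D : PMF (Setoid X)) (hD : IsDecomposition t Δ δ D)
    (N : Set X) (n : ℕ) (hn : Nat.card N = n) (hn2 : 2 ≤ n) :
    ∃ P : Fin ⌈2 * Real.log n / δ⌉₊ → Setoid N,
      (∀ i, ∀ x y : N, (P i).r x y → dist (x : X) (y : X) ≤ t * Δ) ∧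
      (∀ x y : N, dist (x : X) (y : X) ≤ Δ → ∃ i, (P i).r x y) := by
  classical
  obtain ⟨hbound, hprob⟩ := hD
  have hfin : N.Finite := by
    by_contra h
    have hinf : N.Infinite := h
    have := hinf.to_subtype
    rw [Nat.card_eq_zero_of_infinite] at hn
    omega
  haveI : Fintype N := hfin.fintype
  have hsupp_ne : D.support.Nonempty := D.support_nonempty
  -- Averaging: some partition in the support covers a δ-fraction of any set of close pairs.
  have avg : ∀ S : Finset (N × N), S.Nonempty →
      (∀ p ∈ S, dist (p.1 : X) (p.2 : X) ≤ Δ) →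
      ∃ Q ∈ D.support,
        ((S.filter fun p => ¬ Q.r (p.1 : X) (p.2 : X)).card : ℝ) ≤ (1 - δ) * S.card := by
    intro S hne hSd
    by_contra hcon
    push_neg at hcon
    set a : ℝ := δ * S.card with ha
    have ha0 : 0 < a := mul_pos hδ0 (by exact_mod_cast hne.card_pos)
    have hm : ∀ Q ∈ D.support,
        ((S.filter fun p => Q.r (p.1 : X) (p.2 : X)).card : ℝ) < a := by
      intro Q hQ
      have h1 := hcon Q hQ
      have h2 := Finset.card_filter_add_card_filter_not
        (s := S) (p := fun p => Q.r (p.1 : X) (p.2 : X))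
      have h3 : ((S.filter fun p => Q.r (p.1 : X) (p.2 : X)).card : ℝ)
          + ((S.filter fun p => ¬ Q.r (p.1 : X) (p.2 : X)).card : ℝ) = S.card := by
        exact_mod_cast congrArg (Nat.cast : ℕ → ℝ) h2
      nlinarith
    set m : ℕ := ⌈a⌉₊ - 1 with hmdef
    have hceil : 0 < ⌈a⌉₊ := Nat.ceil_pos.mpr ha0
    have hma : (m : ℝ) < a := Nat.lt_ceil.mp (by omega)
    have hmQ : ∀ Q ∈ D.support,
        (S.filter fun p => Q.r (p.1 : X) (p.2 : X)).card ≤ m := by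
      intro Q hQ
      have := Nat.lt_ceil.mpr (hm Q hQ)
      omega
    have key : (S.card : ENNReal) * ENNReal.ofReal δ ≤ (m : ENNReal) := by
      calc (S.card : ENNReal) * ENNReal.ofReal δ
          = ∑ _p ∈ S, ENNReal.ofReal δ := by rw [Finset.sum_const, nsmul_eq_mul]
        _ ≤ ∑ p ∈ S, D.toOuterMeasure {P : Setoid X | P.r (p.1 : X) (p.2 : X)} :=
            Finset.sum_le_sum fun p hp => hprob _ _ (hSd p hp)
        _ = ∑ p ∈ S, ∑' Q : Setoid X,
              Set.indicator {P : Setoid X | P.r (p.1 : X) (p.2 : X)} D Q := by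
            simp only [PMF.toOuterMeasure_apply]
        _ = ∑' Q : Setoid X, ∑ p ∈ S,
              Set.indicator {P : Setoid X | P.r (p.1 : X) (p.2 : X)} D Q :=
            (Summable.tsum_finsetSum fun _ _ => ENNReal.summable).symm
        _ = ∑' Q : Setoid X,
              ((S.filter fun p => Q.r (p.1 : X) (p.2 : X)).card : ENNReal) * D Q := by
            refine tsum_congr fun Q => ?_
            simp only [Set.indicator_apply, Set.mem_setOf_eq]
            rw [Finset.sum_ite, Finset.sum_const, Finset.sum_const_zero, add_zero,
              nsmul_eq_mul]
        _ ≤ ∑' Q : Setoid X, (m : ENNReal) * D Q := by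
            refine ENNReal.tsum_le_tsum fun Q => ?_
            by_cases h : Q ∈ D.support
            · exact mul_le_mul_left (by exact_mod_cast hmQ Q h) _
            · rw [PMF.mem_support_iff, not_not] at h
              simp [h]
        _ = (m : ENNReal) := by rw [ENNReal.tsum_mul_left, D.tsum_coe, mul_one]
    have key2 : a ≤ m := by
      rw [← ENNReal.ofReal_natCast S.card, ← ENNReal.ofReal_mul (Nat.cast_nonneg _),
        ← ENNReal.ofReal_natCast m] at key
      have := (ENNReal.ofReal_le_ofReal_iff (Nat.cast_nonneg _)).mp key
      linarith [this]
    linarith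
  -- Iterating the averaging lemma.
  have lemA : ∀ k : ℕ, ∀ S : Finset (N × N),
      (∀ p ∈ S, dist (p.1 : X) (p.2 : X) ≤ Δ) →
      ∃ Q : Fin k → Setoid X, (∀ i, Q i ∈ D.support) ∧
        ((S.filter fun p => ∀ i, ¬ (Q i).r (p.1 : X) (p.2 : X)).card : ℝ)
          ≤ (1 - δ) ^ k * S.card := by
    intro k
    induction k with
    | zero =>
      intro S hSd
      obtain ⟨q₀, hq₀⟩ := hsupp_ne
      refine ⟨fun _ => q₀, fun _ => hq₀, ?_⟩
      rw [pow_zero, one_mul]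
      exact_mod_cast Finset.card_le_card (Finset.filter_subset _ _)
    | succ k ih =>
      intro S hSd
      rcases S.eq_empty_or_nonempty with hS | hS
      · obtain ⟨q₀, hq₀⟩ := hsupp_ne
        refine ⟨fun _ => q₀, fun _ => hq₀, ?_⟩
        subst hS
        simp only [Finset.filter_empty, Finset.card_empty, Nat.cast_zero, mul_zero, le_refl]
      · obtain ⟨q₀, hq₀, hq₀card⟩ := avg S hS hSd
        set S' := S.filter fun p => ¬ q₀.r (p.1 : X) (p.2 : X) with hS'
        obtain ⟨Q', hQ'supp, hQ'card⟩ := ih S' fun p hp => hSd p (Finset.mem_filter.mp hp).1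
        set Qc : Fin (k + 1) → Setoid X := Fin.cons q₀ Q' with hQc
        refine ⟨Qc, fun i => ?_, ?_⟩
        · refine Fin.cases (motive := fun i => Qc i ∈ D.support) ?_ ?_ i
          · simpa [hQc] using hq₀
          · intro j; simpa [hQc] using hQ'supp j
        have hsub : (S.filter fun p => ∀ i : Fin (k + 1),
              ¬ (Qc i).r (p.1 : X) (p.2 : X))
            ⊆ S'.filter fun p => ∀ i : Fin k, ¬ (Q' i).r (p.1 : X) (p.2 : X) := by
          intro p hp
          rw [Finset.mem_filter] at hp ⊢
          refine ⟨Finset.mem_filter.mpr ⟨hp.1, ?_⟩, fun i => ?_⟩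
          · have := hp.2 0
            have e : Qc 0 = q₀ := Fin.cons_zero _ _
            rw [e] at this; exact this
          · have := hp.2 i.succ
            have e : Qc i.succ = Q' i := Fin.cons_succ _ _ _
            rw [e] at this; exact this
        calc ((S.filter fun p => ∀ i : Fin (k + 1),
                ¬ (Qc i).r (p.1 : X) (p.2 : X)).card : ℝ)
            ≤ ((S'.filter fun p => ∀ i : Fin k, ¬ (Q' i).r (p.1 : X) (p.2 : X)).card : ℝ) := by
              exact_mod_cast Finset.card_le_card hsub
          _ ≤ (1 - δ) ^ k * S'.card := hQ'card
          _ ≤ (1 - δ) ^ k * ((1 - δ) * S.card) := by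
              exact mul_le_mul_of_nonneg_left hq₀card (pow_nonneg (by linarith) _)
          _ = (1 - δ) ^ (k + 1) * S.card := by ring
  -- Apply with k = φ and bound the remaining set by 0.
  set φ := ⌈2 * Real.log n / δ⌉₊ with hφ
  set S₀ : Finset (N × N) :=
    Finset.univ.filter (fun p : N × N => dist (p.1 : X) (p.2 : X) ≤ Δ) with hS₀
  obtain ⟨Q, hQsupp, hQcard⟩ := lemA φ S₀ (fun p hp => (Finset.mem_filter.mp hp).2)
  have hn1 : (1 : ℝ) < n := by exact_mod_cast hn2.trans_lt' one_lt_two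
  have hlog : 0 < Real.log n := Real.log_pos hn1
  have hφpos : 0 < φ := Nat.ceil_pos.mpr (div_pos (by linarith) hδ0)
  have hδφ : 2 * Real.log n ≤ δ * φ := by
    have h1 : 2 * Real.log n / δ ≤ (φ : ℝ) := Nat.le_ceil _
    calc 2 * Real.log n = δ * (2 * Real.log n / δ) := by field_simp
      _ ≤ δ * φ := by nlinarith
  have hpow : (1 - δ) ^ φ < 1 / (n : ℝ) ^ 2 := by
    have h1 : 1 - δ < Real.exp (-δ) := by
      have := Real.add_one_lt_exp (x := -δ) (by linarith)
      linarith
    have h2 : (1 - δ) ^ φ < Real.exp (-δ) ^ φ :=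
      pow_lt_pow_left₀ h1 (by linarith) hφpos.ne'
    have h3 : Real.exp (-δ) ^ φ = Real.exp (-(δ * φ)) := by
      rw [← Real.exp_nat_mul]; ring_nf
    have h4 : Real.exp (-(δ * φ)) ≤ Real.exp (-(2 * Real.log n)) :=
      Real.exp_le_exp.mpr (by linarith)
    have h5 : Real.exp (-(2 * Real.log n)) = 1 / (n : ℝ) ^ 2 := by
      rw [show (2 : ℝ) * Real.log n = Real.log ((n : ℝ) ^ 2) by
        rw [Real.log_pow]; push_cast; ring]
      rw [Real.exp_neg, Real.exp_log (by positivity), one_div]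
    calc (1 - δ) ^ φ < Real.exp (-δ) ^ φ := h2
      _ = Real.exp (-(δ * φ)) := h3
      _ ≤ Real.exp (-(2 * Real.log n)) := h4
      _ = 1 / (n : ℝ) ^ 2 := h5
  have hcardN : Fintype.card N = n := by rw [← hn, Nat.card_eq_fintype_card]
  have hS₀card : (S₀.card : ℝ) ≤ (n : ℝ) ^ 2 := by
    have : S₀.card ≤ Fintype.card (N × N) := Finset.card_le_univ _
    have h2 : Fintype.card (N × N) = n * n := by
      rw [Fintype.card_prod, hcardN]
    rw [h2] at this
    calc (S₀.card : ℝ) ≤ ((n * n : ℕ) : ℝ) := by exact_mod_cast this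
      _ = (n : ℝ) ^ 2 := by push_cast; ring
  have hlt1 : ((S₀.filter fun p => ∀ i, ¬ (Q i).r (p.1 : X) (p.2 : X)).card : ℝ) < 1 := by
    have hnn : (0 : ℝ) ≤ (1 - δ) ^ φ := pow_nonneg (by linarith) _
    have hn2pos : (0 : ℝ) < (n : ℝ) ^ 2 := by positivity
    calc ((S₀.filter fun p => ∀ i, ¬ (Q i).r (p.1 : X) (p.2 : X)).card : ℝ)
        ≤ (1 - δ) ^ φ * S₀.card := hQcard
      _ ≤ (1 - δ) ^ φ * (n : ℝ) ^ 2 := by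
          apply mul_le_mul_of_nonneg_left hS₀card hnn
      _ < (1 / (n : ℝ) ^ 2) * (n : ℝ) ^ 2 := by
          exact mul_lt_mul_of_pos_right hpow hn2pos
      _ = 1 := by field_simp
  have hempty : (S₀.filter fun p => ∀ i, ¬ (Q i).r (p.1 : X) (p.2 : X)) = ∅ := by
    rw [← Finset.card_eq_zero]
    have : ((S₀.filter fun p => ∀ i, ¬ (Q i).r (p.1 : X) (p.2 : X)).card : ℝ) < 1 := hlt1
    exact_mod_cast by
      by_contra h
      have h1 : 1 ≤ (S₀.filter fun p => ∀ i, ¬ (Q i).r (p.1 : X) (p.2 : X)).card :=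
        Nat.one_le_iff_ne_zero.mpr h
      have : (1 : ℝ) ≤ ((S₀.filter fun p => ∀ i, ¬ (Q i).r (p.1 : X) (p.2 : X)).card : ℝ) := by
        exact_mod_cast h1
      linarith
  refine ⟨fun i => Setoid.comap Subtype.val (Q i), fun i x y hxy => ?_, fun x y hxy => ?_⟩
  · exact hbound (Q i) (hQsupp i) (x : X) (y : X) hxy
  · have hmem : (x, y) ∈ S₀ := by
      rw [hS₀, Finset.mem_filter]
      exact ⟨Finset.mem_univ _, hxy⟩
    by_contra hno
    push_neg at hno
    have : (x, y) ∈ (S₀.filter fun p => ∀ i, ¬ (Q i).r (p.1 : X) (p.2 : X)) :=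
      Finset.mem_filter.mpr ⟨hmem, fun i => hno i⟩
    rw [hempty] at this
    exact absurd this (Finset.notMem_empty _)
end

section
/- There are universal constants C, C' ≥ 1 such that for every integer d ≥ 2 and every real t with 2 ≤ t ≤ √(2d/ln d), every finite subset of d-dimensional Euclidean space ℝ^d is (C·t, 2^{-C'·d/t²})-decomposable. -/
open MeasureTheory

noncomputable section SelAux
open Finset

variable {W : Type*} [Fintype W] [DecidableEq W] {m : ℕ}

/-- The element of `B` with minimal priority under the bijection `f`. -/
noncomputable def sel (f : W ≃ Fin m) (B : Finset W) (hB : B.Nonempty) : W :=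
  f.symm ((B.image f).min' (hB.image f))

lemma sel_mem (f : W ≃ Fin m) (B : Finset W) (hB : B.Nonempty) : sel f B hB ∈ B := by
  have h := (B.image f).min'_mem (hB.image f)
  rw [Finset.mem_image] at h
  obtain ⟨b, hb, he⟩ := h
  simpa [sel, ← he] using hb

lemma sel_subset (f : W ≃ Fin m) {B₁ B : Finset W} (h₁ : B₁.Nonempty) (hB : B.Nonempty)
    (hsub : B₁ ⊆ B) (hmem : sel f B hB ∈ B₁) : sel f B₁ h₁ = sel f B hB := by
  have hmin : (B₁.image f).min' (h₁.image f) = (B.image f).min' (hB.image f) := by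
    apply le_antisymm
    · have : f (sel f B hB) = (B.image f).min' (hB.image f) := by
        simp [sel]
      exact this ▸ Finset.min'_le _ _ (Finset.mem_image_of_mem f hmem)
    · exact Finset.min'_subset _ (Finset.image_subset_image hsub)
  simp [sel, hmin]

lemma image_swap_eq {B : Finset W} {b b' : W} (hb : b ∈ B) (hb' : b' ∈ B) :
    B.image (Equiv.swap b b') = B := by
  apply Finset.eq_of_subset_of_card_le
  · intro z hz
    rw [Finset.mem_image] at hz
    obtain ⟨a, ha, rfl⟩ := hz
    rcases eq_or_ne a b with rfl | h1
    · simpa [Equiv.swap_apply_left] using hb'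
    rcases eq_or_ne a b' with rfl | h2
    · simpa [Equiv.swap_apply_right] using hb
    · rwa [Equiv.swap_apply_of_ne_of_ne h1 h2]
  · rw [Finset.card_image_of_injective _ (Equiv.injective _)]

lemma sel_swap (f : W ≃ Fin m) {B : Finset W} (hB : B.Nonempty) {b b' : W}
    (hb : b ∈ B) (hb' : b' ∈ B) :
    sel ((Equiv.swap b b').trans f) B hB = Equiv.swap b b' (sel f B hB) := by
  have him : B.image ((Equiv.swap b b').trans f) = B.image f := by
    have : B.image ((Equiv.swap b b').trans f) = (B.image (Equiv.swap b b')).image f := by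
      rw [Finset.image_image]; rfl
    rw [this, image_swap_eq hb hb']
  simp only [sel]
  have hm : (B.image ((Equiv.swap b b').trans f)).min' (hB.image _)
      = (B.image f).min' (hB.image f) := by congr 1
  rw [hm]
  simp [Equiv.symm_trans_apply]

lemma sel_count {A B : Finset W} (hAB : A ⊆ B) (hB : B.Nonempty) :
    A.card * Fintype.card (W ≃ Fin m) ≤
      (Finset.univ.filter fun f : W ≃ Fin m => sel f B hB ∈ A).card * B.card := by
  classical
  have key : ∀ b ∈ B, ∀ b' ∈ B,
      (Finset.univ.filter fun f : W ≃ Fin m => sel f B hB = b).card =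
      (Finset.univ.filter fun f : W ≃ Fin m => sel f B hB = b').card := by
    intro b hb b' hb'
    apply Finset.card_bij' (fun f _ => (Equiv.swap b b').trans f)
      (fun f _ => (Equiv.swap b b').trans f)
    · intro f hf
      rw [Finset.mem_filter] at hf ⊢
      refine ⟨Finset.mem_univ _, ?_⟩
      rw [sel_swap f hB hb hb', hf.2, Equiv.swap_apply_left]
    · intro f hf
      rw [Finset.mem_filter] at hf ⊢
      refine ⟨Finset.mem_univ _, ?_⟩
      rw [sel_swap f hB hb hb', hf.2, Equiv.swap_apply_right]
    · intro f _
      ext z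
      simp [Equiv.trans_apply, Equiv.swap_apply_self]
    · intro f _
      ext z
      simp [Equiv.trans_apply, Equiv.swap_apply_self]
  obtain ⟨b₀, hb₀⟩ := Finset.Nonempty.exists_mem hB
  set k := (Finset.univ.filter fun f : W ≃ Fin m => sel f B hB = b₀).card with hk
  have hcardΩ : Fintype.card (W ≃ Fin m) = B.card * k := by
    rw [← Finset.card_univ]
    rw [Finset.card_eq_sum_card_fiberwise (fun f _ => sel_mem f B hB)]
    rw [Finset.sum_congr rfl (fun b hb => key b hb b₀ hb₀), Finset.sum_const, smul_eq_mul]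
  have hA : (Finset.univ.filter fun f : W ≃ Fin m => sel f B hB ∈ A).card = A.card * k := by
    rw [Finset.card_eq_sum_card_fiberwise
      (f := fun f : W ≃ Fin m => sel f B hB) (t := A)
        (s := Finset.univ.filter fun f : W ≃ Fin m => sel f B hB ∈ A) (fun f hf => (Finset.mem_filter.mp hf).2)]
    have : ∀ b ∈ A, ((Finset.univ.filter fun f : W ≃ Fin m => sel f B hB ∈ A).filter
        fun f => sel f B hB = b).card = k := by
      intro b hb
      have heq : ((Finset.univ.filter fun f : W ≃ Fin m => sel f B hB ∈ A).filter
          fun f => sel f B hB = b) = Finset.univ.filter fun f => sel f B hB = b := by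
        ext f
        simp only [Finset.mem_filter, Finset.mem_univ, true_and]
        exact ⟨fun h => h.2, fun h => ⟨h ▸ hb, h⟩⟩
      rw [heq, key b (hAB hb) b₀ hb₀]
    rw [Finset.sum_congr rfl this, Finset.sum_const, smul_eq_mul]
  rw [hA, hcardΩ]
  ring_nf
  exact le_refl _

end SelAux

noncomputable section LatAux
open MeasureTheory

variable {d : ℕ}

/-- Round each coordinate down to a multiple of `ε`. -/
def floE (ε : ℝ) (p : EuclideanSpace ℝ (Fin d)) : EuclideanSpace ℝ (Fin d) :=
  WithLp.toLp 2 (fun i => ε * ⌊p i / ε⌋)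

/-- `z` belongs to the lattice `ε ℤ^d`. -/
def isLat (ε : ℝ) (z : EuclideanSpace ℝ (Fin d)) : Prop := ∀ i, ∃ k : ℤ, z i = ε * k

lemma isLat_floE (ε : ℝ) (p : EuclideanSpace ℝ (Fin d)) : isLat ε (floE ε p) :=
  fun i => ⟨⌊p i / ε⌋, rfl⟩

/-- The half-open cube of a lattice point. -/
def cubeE (ε : ℝ) (w : EuclideanSpace ℝ (Fin d)) : Set (EuclideanSpace ℝ (Fin d)) :=
  {q | ∀ i, q i ∈ Set.Ico (w i) (w i + ε)}

lemma floE_mem_cubeE {ε : ℝ} (hε : 0 < ε) (p : EuclideanSpace ℝ (Fin d)) :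
    p ∈ cubeE ε (floE ε p) := by
  intro i
  constructor
  · calc ε * ⌊p i / ε⌋ ≤ ε * (p i / ε) := by
          exact mul_le_mul_of_nonneg_left (Int.floor_le _) hε.le
      _ = p i := by field_simp
  · calc p i = ε * (p i / ε) := by field_simp
      _ < ε * (⌊p i / ε⌋ + 1) := by
          apply mul_lt_mul_of_pos_left _ hε
          exact Int.lt_floor_add_one _
      _ = floE ε p i + ε := by simp [floE]; ring

lemma cubeE_eq_fiber {ε : ℝ} (hε : 0 < ε) {w : EuclideanSpace ℝ (Fin d)} (hw : isLat ε w) :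
    cubeE ε w = {q | floE ε q = w} := by
  ext q
  constructor
  · intro hq
    show floE ε q = w
    ext i
    obtain ⟨k, hk⟩ := hw i
    obtain ⟨h1, h2⟩ := hq i
    have hfl : ⌊q i / ε⌋ = k := by
      rw [Int.floor_eq_iff]
      constructor
      · rw [le_div_iff₀ hε]; rw [hk] at h1; linarith
      · rw [div_lt_iff₀ hε]; rw [hk] at h2; push_cast; linarith
    show ε * (⌊q i / ε⌋ : ℝ) = w i
    rw [hfl, hk]
  · intro hq
    rw [← hq]
    exact floE_mem_cubeE hε q

lemma volume_cubeE {ε : ℝ} (hε : 0 < ε) (w : EuclideanSpace ℝ (Fin d)) :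
    volume (cubeE ε w) = ENNReal.ofReal (ε ^ d) := by
  have h1 : cubeE ε w = (MeasurableEquiv.toLp 2 (Fin d → ℝ)).symm ⁻¹'
      (Set.univ.pi fun i => Set.Ico (w i) (w i + ε)) := by
    ext q
    simp [cubeE, Set.mem_pi, MeasurableEquiv.coe_toLp_symm]
  rw [h1, MeasurePreserving.measure_preimage (EuclideanSpace.volume_preserving_symm_measurableEquiv_toLp _)]
  · rw [volume_pi_pi]
    simp only [Real.volume_Ico, add_sub_cancel_left]
    rw [Finset.prod_const, ← ENNReal.ofReal_pow hε.le]
    simp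
  · exact (MeasurableSet.univ_pi (fun i => measurableSet_Ico)).nullMeasurableSet

lemma measurable_cubeE (ε : ℝ) (w : EuclideanSpace ℝ (Fin d)) :
    MeasurableSet (cubeE ε w) := by
  have h1 : cubeE ε w = (MeasurableEquiv.toLp 2 (Fin d → ℝ)).symm ⁻¹'
      (Set.univ.pi fun i => Set.Ico (w i) (w i + ε)) := by
    ext q
    simp [cubeE, Set.mem_pi, MeasurableEquiv.coe_toLp_symm]
  rw [h1]
  exact (MeasurableEquiv.toLp 2 (Fin d → ℝ)).symm.measurable
    (MeasurableSet.univ_pi (fun i => measurableSet_Ico))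

lemma dist_le_of_cubeE {ε : ℝ} (hε : 0 < ε) {w q : EuclideanSpace ℝ (Fin d)}
    (hq : q ∈ cubeE ε w) : dist q w ≤ ε * Real.sqrt d := by
  rw [EuclideanSpace.dist_eq]
  have hb : ∀ i, dist (q i) (w i) ^ 2 ≤ ε ^ 2 := by
    intro i
    obtain ⟨h1, h2⟩ := hq i
    rw [Real.dist_eq, sq_abs]
    nlinarith
  calc Real.sqrt (∑ i, dist (q i) (w i) ^ 2) ≤ Real.sqrt (∑ _i : Fin d, ε ^ 2) := by
        apply Real.sqrt_le_sqrt
        exact Finset.sum_le_sum (fun i _ => hb i)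
    _ = ε * Real.sqrt d := by
        rw [Finset.sum_const, Finset.card_univ, Fintype.card_fin, nsmul_eq_mul]
        rw [Real.sqrt_mul (by positivity), Real.sqrt_sq hε.le]
        ring

lemma dist_floE {ε : ℝ} (hε : 0 < ε) (p : EuclideanSpace ℝ (Fin d)) :
    dist (floE ε p) p ≤ ε * Real.sqrt d := by
  rw [dist_comm]
  exact dist_le_of_cubeE hε (floE_mem_cubeE hε p)

end LatAux

noncomputable section EllAux

lemma sum_sq_eq_one {d : ℕ} {e : EuclideanSpace ℝ (Fin d)} (he : ‖e‖ = 1) :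
    (∑ i, e i * e i) = 1 := by
  have h : (inner ℝ e e : ℝ) = 1 := by
    rw [real_inner_self_eq_norm_sq, he]; norm_num
  rw [PiLp.inner_apply] at h
  simpa [RCLike.inner_apply, conj_trivial, pow_two] using h

lemma detL {d : ℕ} (hd : 1 ≤ d) {e : EuclideanSpace ℝ (Fin d)} (he : ‖e‖ = 1)
    {a b : ℝ} (hb : 0 < b) :
    LinearMap.det ((b • LinearMap.id : EuclideanSpace ℝ (Fin d) →ₗ[ℝ] EuclideanSpace ℝ (Fin d))
      + (a - b) • ((innerₛₗ ℝ e).smulRight e)) = a * b ^ (d - 1) := by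
  classical
  set L := (b • LinearMap.id : EuclideanSpace ℝ (Fin d) →ₗ[ℝ] EuclideanSpace ℝ (Fin d))
      + (a - b) • ((innerₛₗ ℝ e).smulRight e) with hL
  set bas := (EuclideanSpace.basisFun (Fin d) ℝ).toBasis with hbas
  rw [← LinearMap.det_toMatrix bas]
  have hmat : LinearMap.toMatrix bas bas L
      = b • (1 : Matrix (Fin d) (Fin d) ℝ) + (a - b) • Matrix.vecMulVec e e := by
    ext i j
    rw [LinearMap.toMatrix_apply]
    have hbj : bas j = EuclideanSpace.single j 1 := by
      rw [hbas, OrthonormalBasis.coe_toBasis, EuclideanSpace.basisFun_apply]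
    have hinner : (inner ℝ e (EuclideanSpace.single j (1:ℝ)) : ℝ) = e j := by
      rw [PiLp.inner_apply]
      simp [EuclideanSpace.single_apply, RCLike.inner_apply, conj_trivial]
    rw [hbas, OrthonormalBasis.coe_toBasis_repr_apply, EuclideanSpace.basisFun_repr]
    rw [hL]
    simp only [LinearMap.add_apply, LinearMap.smul_apply, LinearMap.id_apply,
      LinearMap.smulRight_apply, innerₛₗ_apply_apply, ← hbas, hbj, hinner]
    simp only [PiLp.add_apply, PiLp.smul_apply, smul_eq_mul]
    rw [Matrix.add_apply, Matrix.smul_apply, Matrix.smul_apply, Matrix.one_apply,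
      Matrix.vecMulVec_apply]
    rw [EuclideanSpace.single_apply]
    by_cases hij : i = j
    · subst hij
      simp only [if_pos rfl, smul_eq_mul]
    · rw [if_neg hij]
      simp only [smul_eq_mul]
      ring
  rw [hmat]
  have h2 : b • (1 : Matrix (Fin d) (Fin d) ℝ) + (a - b) • Matrix.vecMulVec e e
      = b • ((1 : Matrix (Fin d) (Fin d) ℝ) + ((a - b)/b) • Matrix.vecMulVec e e) := by
    rw [smul_add, smul_smul]
    congr 2
    field_simp
  rw [h2, Matrix.det_smul]
  have h3 : ((a - b)/b) • Matrix.vecMulVec e e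
      = Matrix.vecMulVec (((a - b)/b) • e) e := by
    ext i j
    simp [Matrix.vecMulVec_apply, Matrix.smul_apply, smul_eq_mul]
    ring
  rw [h3, Matrix.vecMulVec_eq (Fin 1), Matrix.det_one_add_replicateCol_mul_replicateRow]
  have h4 : dotProduct e (((a - b)/b) • e : EuclideanSpace ℝ (Fin d)) = (a-b)/b := by
    simp only [dotProduct, Pi.smul_apply, PiLp.smul_apply, smul_eq_mul]
    calc (∑ i, e i * (((a-b)/b) * e i)) = ((a-b)/b) * ∑ i, e i * e i := by
          rw [Finset.mul_sum]; congr 1; funext i; ring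
      _ = (a-b)/b := by rw [sum_sq_eq_one he]; ring
  rw [h4]
  have h5 : b ^ Fintype.card (Fin d) = b ^ (d-1) * b := by
    rw [Fintype.card_fin, ← pow_succ, Nat.sub_add_cancel hd]
  rw [h5]
  field_simp
  ring

lemma ellipse_bounds {d : ℕ} {e v : EuclideanSpace ℝ (Fin d)} (he : ‖e‖ = 1)
    {hh b : ℝ} (hh0 : 0 ≤ hh) (hb : 0 ≤ b) (hv : ‖v‖ ≤ 1) :
    ‖(2*hh) • e + (b • v + ((hh - b) * (inner ℝ e v : ℝ)) • e)‖^2 ≤ 9*hh^2 + b^2 ∧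
    hh ≤ (inner ℝ ((2*hh) • e + (b • v + ((hh - b) * (inner ℝ e v : ℝ)) • e)) e : ℝ) := by
  have hcs : |(inner ℝ e v : ℝ)| ≤ 1 := by
    calc |(inner ℝ e v : ℝ)| ≤ ‖e‖ * ‖v‖ := abs_real_inner_le_norm e v
      _ ≤ 1 := by rw [he]; simpa using hv
  set w : ℝ := (inner ℝ e v : ℝ) with hw
  have hee : (inner ℝ e e : ℝ) = 1 := by
    rw [real_inner_self_eq_norm_sq, he]; norm_num
  set z : EuclideanSpace ℝ (Fin d) := v - w • e with hz
  have horth : (inner ℝ e z : ℝ) = 0 := by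
    rw [hz, inner_sub_right, real_inner_smul_right, hee, ← hw]
    ring
  have horth2 : (inner ℝ z e : ℝ) = 0 := by rw [real_inner_comm, horth]
  have hvz : v = z + w • e := by rw [hz]; abel
  have hzn : ‖z‖^2 = ‖v‖^2 - w^2 := by
    have hv2 : ‖v‖^2 = ‖z‖^2 + 2*(inner ℝ z (w • e) : ℝ) + ‖w • e‖^2 := by
      rw [hvz, norm_add_sq_real]
    rw [real_inner_smul_right, horth2, norm_smul, he, Real.norm_eq_abs] at hv2
    rw [hv2]
    rw [mul_pow, sq_abs]
    ring
  have hdecomp : (2*hh) • e + (b • v + ((hh - b) * w) • e) = (2*hh + hh*w) • e + b • z := by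
    rw [hz]
    module
  rw [hdecomp]
  have hwl : -1 ≤ w := neg_le_of_abs_le hcs
  have hwu : w ≤ 1 := le_of_abs_le hcs
  have hz2 : ‖z‖^2 ≤ 1 - w^2 := by
    rw [hzn]; nlinarith [hv, norm_nonneg v]
  constructor
  · have hns : ‖(2*hh + hh*w) • e + b • z‖^2
        = (2*hh+hh*w)^2 + b^2 * ‖z‖^2 := by
      rw [norm_add_sq_real, real_inner_smul_left, real_inner_smul_right, horth,
        norm_smul, norm_smul, he, Real.norm_eq_abs, Real.norm_eq_abs]
      rw [mul_one, sq_abs, mul_pow, sq_abs]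
      ring
    rw [hns]
    have key1 : (2*hh + hh*w)^2 ≤ 9*hh^2 := by nlinarith [sq_nonneg hh, mul_nonneg hh0 hh0]
    have hzz : 0 ≤ ‖z‖^2 := sq_nonneg _
    nlinarith [sq_nonneg w, sq_nonneg b]
  · rw [inner_add_left, real_inner_smul_left, real_inner_smul_left, hee, horth2]
    nlinarith
end EllAux

noncomputable section NumAux

lemma key_numeric {d : ℕ} (hd : 2 ≤ d) {t : ℝ} (ht : 2 ≤ t)
    (ht2 : t^2 * Real.log d ≤ 2*d) :
    36 * t * Real.exp (3*(d:ℝ)/t^2) ≤ (2:ℝ) ^ ((64:ℝ)*(d:ℝ)/t^2) := by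
  have ht0 : (0:ℝ) < t := by linarith
  have hd2 : (2:ℝ) ≤ (d:ℝ) := by exact_mod_cast hd
  have hl2 := Real.log_two_gt_d9
  have hl2' := Real.log_two_lt_d9
  have hld : Real.log 2 ≤ Real.log d := Real.log_le_log (by norm_num) hd2
  have hlogd0 : 0 < Real.log d := by linarith
  set w : ℝ := (d:ℝ)/t^2 with hwdef
  have ht2pos : (0:ℝ) < t^2 := by positivity
  have hwpos : 0 < w := by
    apply div_pos (by linarith) ht2pos
  have hw : Real.log d / 2 ≤ w := by
    rw [hwdef, div_le_div_iff₀ (by norm_num) ht2pos]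
    nlinarith
  have hw2 : Real.log 2 / 2 ≤ w := le_trans (by linarith) hw
  have hti : t^2 ≤ 2*(d:ℝ)/Real.log d := by
    rw [le_div_iff₀ hlogd0]; linarith
  have hlt2 : 2*Real.log t = Real.log (t^2) := by
    rw [Real.log_pow]; push_cast; ring
  have hlogdiv : Real.log (2*(d:ℝ)/Real.log d)
      = Real.log 2 + Real.log d - Real.log (Real.log d) := by
    rw [Real.log_div (by positivity) (ne_of_gt hlogd0), Real.log_mul (by norm_num) (by positivity)]
  have hloglog : 1 - 1/Real.log 2 ≤ Real.log (Real.log d) := by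
    have h1 : Real.log (Real.log d)⁻¹ ≤ (Real.log d)⁻¹ - 1 :=
      Real.log_le_sub_one_of_pos (by positivity)
    rw [Real.log_inv] at h1
    have h2 : (Real.log d)⁻¹ ≤ (Real.log 2)⁻¹ := by
      apply inv_anti₀ (by linarith) hld
    have : 1 - (Real.log d)⁻¹ ≤ Real.log (Real.log d) := by linarith
    calc 1 - 1/Real.log 2 = 1 - (Real.log 2)⁻¹ := by rw [one_div]
      _ ≤ 1 - (Real.log d)⁻¹ := by linarith
      _ ≤ Real.log (Real.log d) := this
  have hlogt : Real.log t ≤ 3*w := by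
    have h1 : Real.log (t^2) ≤ Real.log (2*(d:ℝ)/Real.log d) :=
      Real.log_le_log (by positivity) hti
    rw [hlogdiv] at h1
    have hι : 1/Real.log 2 ≤ 1.4428 := by
      rw [div_le_iff₀ (by linarith)]
      nlinarith
    have h3 : 2*Real.log t ≤ 3 * Real.log d := by
      rw [hlt2]
      linarith
    nlinarith
  have h36 : Real.log 36 ≤ 12*w := by
    have h1 : Real.log 36 ≤ Real.log 64 := Real.log_le_log (by norm_num) (by norm_num)
    have h2 : Real.log 64 = 6 * Real.log 2 := by
      rw [show (64:ℝ) = 2^(6:ℕ) by norm_num, Real.log_pow]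
      push_cast; ring
    nlinarith
  have hkey : Real.log 36 + Real.log t + 3*w ≤ Real.log 2 * ((64:ℝ)*w) := by
    nlinarith
  have hw3 : 3*(d:ℝ)/t^2 = 3*w := by rw [hwdef]; ring
  have hw64 : (64:ℝ)*(d:ℝ)/t^2 = 64*w := by rw [hwdef]; ring
  rw [hw3, hw64]
  calc 36 * t * Real.exp (3*w)
      = Real.exp (Real.log 36 + Real.log t + 3*w) := by
        rw [Real.exp_add, Real.exp_add, Real.exp_log (by norm_num : (0:ℝ) < 36),
          Real.exp_log ht0]
    _ ≤ Real.exp (Real.log 2 * (64*w)) := Real.exp_le_exp.mpr hkey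
    _ = (2:ℝ) ^ ((64:ℝ)*w) := by rw [Real.rpow_def_of_pos (by norm_num)]

end NumAux


noncomputable section MainAux
open Finset MeasureTheory
open scoped ENNReal

lemma coord_le_norm {d : ℕ} (z : EuclideanSpace ℝ (Fin d)) (i : Fin d) : |z i| ≤ ‖z‖ := by
  rw [EuclideanSpace.norm_eq]
  rw [show |z i| = Real.sqrt (|z i|^2) by rw [Real.sqrt_sq (abs_nonneg _)]]
  apply Real.sqrt_le_sqrt
  rw [sq_abs]
  calc z i ^ 2 = ‖z i‖^2 := by rw [Real.norm_eq_abs, sq_abs]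
    _ ≤ ∑ j, ‖z j‖^2 := Finset.single_le_sum (f := fun j => ‖z j‖^2) (fun j _ => sq_nonneg _) (Finset.mem_univ i)

lemma sq_le_imp_le {a b : ℝ} (ha : 0 ≤ a) (hb : 0 ≤ b) (h : a^2 ≤ b^2) : a ≤ b := by
  nlinarith

set_option maxHeartbeats 2000000 in
lemma euclid_construct {d : ℕ} (hd : 2 ≤ d) {t Δ : ℝ} (ht : 2 ≤ t)
    (ht2 : t^2 * Real.log d ≤ 2*d) (hΔ : 0 < Δ)
    (s : Finset (EuclideanSpace ℝ (Fin d))) (hs : s.Nonempty) :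
    ∃ D : PMF (Setoid ↥s), IsDecomposition (16*t) Δ ((2:ℝ)^(-((64:ℝ)*(d:ℝ)/t^2))) D := by
  classical
  have ht0 : (0:ℝ) < t := by linarith
  have hd1 : 1 ≤ d := by omega
  have hd2 : (2:ℝ) ≤ (d:ℝ) := by exact_mod_cast hd
  have hd0 : (0:ℝ) < (d:ℝ) := by linarith
  have hsd1 : 1 ≤ Real.sqrt d := by
    rw [show (1:ℝ) = Real.sqrt 1 by simp]
    exact Real.sqrt_le_sqrt (by linarith)
  have hsdd : Real.sqrt d ≤ (d:ℝ) := by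
    nlinarith [Real.sq_sqrt hd0.le, Real.sqrt_nonneg (d:ℝ)]
  -- parameters (introduced as opaque constants so that `linarith` stays small)
  obtain ⟨σ, hσdef⟩ : ∃ σ:ℝ, σ = 1/t^2 := ⟨_, rfl⟩
  have hσ0 : 0 < σ := by rw [hσdef]; positivity
  have htσ : t^2 * σ = 1 := by rw [hσdef]; field_simp
  have hσ4 : σ ≤ 1/4 := by
    rw [hσdef, div_le_div_iff₀ (by positivity) (by norm_num)]
    nlinarith
  obtain ⟨ε, hεdef⟩ : ∃ ε:ℝ, ε = Δ/((d:ℝ)*t^2) := ⟨_, rfl⟩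
  have hε : 0 < ε := by rw [hεdef]; positivity
  obtain ⟨η, hηdef⟩ : ∃ η:ℝ, η = ε * Real.sqrt d := ⟨_, rfl⟩
  have hη0 : 0 < η := by rw [hηdef]; positivity
  have hησ : η ≤ Δ*σ := by
    rw [hηdef, hεdef, hσdef]
    rw [div_mul_eq_mul_div, div_le_iff₀ (by positivity)]
    have h2 : Δ*(1/t^2)*((d:ℝ)*t^2) = Δ*d := by field_simp
    rw [h2]
    nlinarith
  have hηΔ4 : η ≤ Δ/4 := by
    have := mul_le_mul_of_nonneg_left hσ4 hΔ.le
    linarith only [hησ, this]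
  obtain ⟨R, hRdef⟩ : ∃ R:ℝ, R = 8*t*Δ := ⟨_, rfl⟩
  have hR0 : 0 < R := by rw [hRdef]; positivity
  have hRΔ : 16*Δ ≤ R := by rw [hRdef]; nlinarith only [ht, hΔ]
  have hηR : η ≤ R := by linarith only [hηΔ4, hRΔ, hΔ]
  obtain ⟨R₂, hR₂def⟩ : ∃ r:ℝ, r = R + η := ⟨_, rfl⟩
  have hR₂0 : 0 < R₂ := by rw [hR₂def]; positivity
  obtain ⟨hh, hhdef⟩ : ∃ h:ℝ, h = Δ/2 + η := ⟨_, rfl⟩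
  have hh0 : 0 < hh := by rw [hhdef]; positivity
  have hhΔ : hh ≤ 3*Δ/4 := by rw [hhdef]; linarith only [hηΔ4]
  obtain ⟨β, hβdef⟩ : ∃ β:ℝ, β = R*(1-σ) := ⟨_, rfl⟩
  have hβ0 : 0 < β := by
    rw [hβdef]
    apply mul_pos hR0
    linarith only [hσ4]
  have hβR : β ≤ R := by
    rw [hβdef]
    nlinarith only [hσ0, hR0]
  set ρ : ℝ := s.sup' hs (fun p => ‖p‖) with hρdef
  have hρmem : ∀ p ∈ s, ‖p‖ ≤ ρ := fun p hp => Finset.le_sup' _ hp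
  -- the finite lattice
  set Mset : Set (EuclideanSpace ℝ (Fin d)) := {z | isLat ε z ∧ ‖z‖ ≤ ρ + R} with hMsetdef
  have hMfin : Mset.Finite := by
    set c : ℤ := ⌈(ρ+R)/ε⌉ with hcdef
    have hT : (Set.univ.pi (fun _ : Fin d => Set.Icc (-c) c)).Finite :=
      Set.Finite.pi (fun i => Set.finite_Icc _ _)
    apply Set.Finite.subset (hT.image (fun k => (WithLp.toLp 2 (fun i => ε * k i) : EuclideanSpace ℝ (Fin d))))
    rintro z ⟨hlat, hnorm⟩
    choose k hk using hlat
    refine ⟨k, ?_, ?_⟩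
    · intro i _
      have h1 : |z i| ≤ ρ + R := le_trans (coord_le_norm z i) hnorm
      have h2 : |(k i : ℝ)| ≤ (ρ+R)/ε := by
        rw [le_div_iff₀ hε]
        calc |(k i : ℝ)| * ε = |z i| := by
              rw [hk i, abs_mul, abs_of_pos hε]; ring
          _ ≤ ρ + R := h1
      have h3 : ((ρ+R)/ε : ℝ) ≤ (c:ℝ) := Int.le_ceil _
      have h4 : |(k i:ℝ)| ≤ (c:ℝ) := le_trans h2 h3
      rw [Set.mem_Icc]
      constructor
      · exact_mod_cast neg_le_of_abs_le h4
      · exact_mod_cast le_of_abs_le h4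
    · ext i
      exact (hk i).symm
  set M : Finset (EuclideanSpace ℝ (Fin d)) := hMfin.toFinset with hMdef
  have hMmem : ∀ z, z ∈ M ↔ isLat ε z ∧ ‖z‖ ≤ ρ + R := by
    intro z
    rw [hMdef, Set.Finite.mem_toFinset]
    rfl
  -- the probability space
  set Ω := (↥M ≃ Fin (Fintype.card ↥M)) with hΩdef
  haveI hΩne : Nonempty Ω := ⟨Fintype.equivFin _⟩
  have hflo : ∀ p : EuclideanSpace ℝ (Fin d), dist (floE ε p) p ≤ η := by
    intro p
    rw [hηdef]
    exact dist_floE hε p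
  have hfloM : ∀ p : EuclideanSpace ℝ (Fin d), dist p ((0:EuclideanSpace ℝ (Fin d))) ≤ ρ + R - η
      → floE ε p ∈ M := by
    intro p hp
    rw [hMmem]
    refine ⟨isLat_floE ε p, ?_⟩
    calc ‖floE ε p‖ = dist (floE ε p) 0 := by rw [dist_zero_right]
      _ ≤ dist (floE ε p) p + dist p 0 := dist_triangle _ _ _
      _ ≤ η + (ρ + R - η) := add_le_add (hflo p) hp
      _ = ρ + R := by ring
  -- the neighborhoods
  set N : ↥s → Finset ↥M := fun x =>
    Finset.univ.filter (fun w : ↥M => dist (w:EuclideanSpace ℝ (Fin d)) (x:EuclideanSpace ℝ (Fin d)) ≤ R) with hNdef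
  have hNmem : ∀ (x : ↥s) (w : ↥M), w ∈ N x ↔
      dist (w:EuclideanSpace ℝ (Fin d)) (x:EuclideanSpace ℝ (Fin d)) ≤ R := by
    intro x w
    rw [hNdef]
    simp only [Finset.mem_filter, Finset.mem_univ, true_and]
  have hNne : ∀ x : ↥s, (N x).Nonempty := by
    intro x
    have hxmem : floE ε (x:EuclideanSpace ℝ (Fin d)) ∈ M := by
      apply hfloM
      rw [dist_zero_right]
      have := hρmem _ x.2
      linarith
    refine ⟨⟨floE ε (x:EuclideanSpace ℝ (Fin d)), hxmem⟩, ?_⟩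
    rw [hNmem]
    calc dist (floE ε (x:EuclideanSpace ℝ (Fin d))) (x:EuclideanSpace ℝ (Fin d)) ≤ η := hflo _
      _ ≤ R := hηR
  set cl : Ω → ↥s → ↥M := fun f x => sel f (N x) (hNne x) with hcldef
  set Φ : Ω → Setoid ↥s := fun f => Setoid.ker (cl f) with hΦdef
  refine ⟨PMF.map Φ (PMF.uniformOfFintype Ω), ?_, ?_⟩
  · -- diameter
    intro P hP x y hxy
    rw [PMF.support_map] at hP
    obtain ⟨f, -, rfl⟩ := hP
    have hcc : cl f x = cl f y := hxy
    have h1 : cl f x ∈ N x := sel_mem _ _ _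
    have h2 : cl f y ∈ N y := sel_mem _ _ _
    rw [hNmem] at h1 h2
    rw [Subtype.dist_eq]
    calc dist (x:EuclideanSpace ℝ (Fin d)) (y:EuclideanSpace ℝ (Fin d))
        ≤ dist (x:EuclideanSpace ℝ (Fin d)) (cl f x : EuclideanSpace ℝ (Fin d))
          + dist (cl f x : EuclideanSpace ℝ (Fin d)) (y:EuclideanSpace ℝ (Fin d)) := dist_triangle _ _ _
      _ ≤ R + R := by
          apply add_le_add
          · rw [dist_comm]; exact h1
          · rw [hcc]; exact h2
      _ = 16*t*Δ := by rw [hRdef]; ring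
  · -- probability
    intro x y hxy
    have hδ0 : (0:ℝ) < (2:ℝ)^(-((64:ℝ)*(d:ℝ)/t^2)) := Real.rpow_pos_of_pos (by norm_num) _
    have hδ1 : ((2:ℝ)^(-((64:ℝ)*(d:ℝ)/t^2))) ≤ 1 := by
      apply Real.rpow_le_one_of_one_le_of_nonpos (by norm_num)
      have : (0:ℝ) ≤ (64:ℝ)*(d:ℝ)/t^2 := by positivity
      linarith
    by_cases hxyeq : x = y
    · subst hxyeq
      have huniv : {P : Setoid ↥s | P.r x x} = Set.univ :=
        Set.eq_univ_of_forall (fun P => P.refl' x)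
      rw [huniv]
      have h1 : (PMF.map Φ (PMF.uniformOfFintype Ω)).toOuterMeasure Set.univ = 1 := by
        rw [PMF.toOuterMeasure_apply]
        simp only [Set.indicator_univ]
        exact PMF.tsum_coe _
      rw [h1]
      exact ENNReal.ofReal_le_one.mpr hδ1
    -- main case
    have hxy0 : (y:EuclideanSpace ℝ (Fin d)) - (x:EuclideanSpace ℝ (Fin d)) ≠ 0 := by
      rw [sub_ne_zero]
      intro hc
      exact hxyeq (Subtype.ext hc.symm)
    set u : EuclideanSpace ℝ (Fin d) := (y:EuclideanSpace ℝ (Fin d)) - (x:EuclideanSpace ℝ (Fin d)) with hudef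
    set e : EuclideanSpace ℝ (Fin d) := ‖u‖⁻¹ • u with hedef
    have he : ‖e‖ = 1 := norm_smul_inv_norm hxy0
    have hu0 : 0 < ‖u‖ := norm_pos_iff.mpr hxy0
    have huΔ : ‖u‖ ≤ Δ := by
      rw [hudef, ← dist_eq_norm, dist_comm, ← Subtype.dist_eq]
      exact hxy
    set CAP : Set (EuclideanSpace ℝ (Fin d)) :=
      {z | dist z (x:EuclideanSpace ℝ (Fin d)) ≤ R ∧ Δ/2 ≤ (inner ℝ (z - (x:EuclideanSpace ℝ (Fin d))) e : ℝ)} with hCAPdef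
    have hCAPy : ∀ z ∈ CAP, dist z (y:EuclideanSpace ℝ (Fin d)) ≤ R := by
      rintro z ⟨hz1, hz2⟩
      have hinner : (inner ℝ (z - (x:EuclideanSpace ℝ (Fin d))) u : ℝ) = ‖u‖ * (inner ℝ (z - (x:EuclideanSpace ℝ (Fin d))) e : ℝ) := by
        rw [hedef, real_inner_smul_right]
        field_simp
      have hzy : z - (y:EuclideanSpace ℝ (Fin d)) = (z - (x:EuclideanSpace ℝ (Fin d))) - u := by
        rw [hudef]; abel
      have hnormsq : ‖z - (y:EuclideanSpace ℝ (Fin d))‖^2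
          = ‖z - (x:EuclideanSpace ℝ (Fin d))‖^2 - 2*(inner ℝ (z - (x:EuclideanSpace ℝ (Fin d))) u : ℝ) + ‖u‖^2 := by
        rw [hzy, norm_sub_sq_real]
      have hzx : ‖z - (x:EuclideanSpace ℝ (Fin d))‖ ≤ R := by
        rw [← dist_eq_norm]; exact hz1
      rw [dist_eq_norm]
      apply sq_le_imp_le (norm_nonneg _) hR0.le
      rw [hnormsq, hinner]
      nlinarith [norm_nonneg (z - (x:EuclideanSpace ℝ (Fin d)))]
    set A : Finset ↥M := Finset.univ.filter (fun w : ↥M => (w:EuclideanSpace ℝ (Fin d)) ∈ CAP) with hAdef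
    set B : Finset ↥M := N x ∪ N y with hBdef
    have hAsub : ∀ w ∈ A, w ∈ N x ∧ w ∈ N y := by
      intro w hw
      rw [hAdef, Finset.mem_filter] at hw
      have hwCAP : (w:EuclideanSpace ℝ (Fin d)) ∈ CAP := hw.2
      constructor
      · rw [hNmem]; exact hwCAP.1
      · rw [hNmem]; exact hCAPy _ hwCAP
    have hAB : A ⊆ B := fun w hw => Finset.mem_union_left _ (hAsub w hw).1
    have hBne : B.Nonempty := Finset.Nonempty.mono (Finset.subset_union_left) (hNne x)
    -- event inclusion
    have hevent : ∀ f : Ω, sel f B hBne ∈ A → cl f x = cl f y := by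
      intro f hf
      obtain ⟨h1, h2⟩ := hAsub _ hf
      have e1 : cl f x = sel f B hBne := by
        rw [hcldef]
        exact sel_subset f (hNne x) hBne Finset.subset_union_left h1
      have e2 : cl f y = sel f B hBne := by
        rw [hcldef]
        exact sel_subset f (hNne y) hBne Finset.subset_union_right h2
      rw [e1, e2]
    -- the ellipsoid
    set L : EuclideanSpace ℝ (Fin d) →ₗ[ℝ] EuclideanSpace ℝ (Fin d) :=
      (β • LinearMap.id) + (hh - β) • ((innerₛₗ ℝ e).smulRight e) with hLdef
    have hLdet : LinearMap.det L = hh * β^(d-1) := detL hd1 he hβ0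
    have hLv : ∀ v, L v = β • v + ((hh - β) * (inner ℝ e v : ℝ)) • e := by
      intro v
      rw [hLdef]
      simp only [LinearMap.add_apply, LinearMap.smul_apply, LinearMap.id_apply,
        LinearMap.smulRight_apply, innerₛₗ_apply_apply]
      rw [smul_smul]
    set c0 : EuclideanSpace ℝ (Fin d) := (x:EuclideanSpace ℝ (Fin d)) + (2*hh) • e with hc0def
    set E : Set (EuclideanSpace ℝ (Fin d)) := (fun v => c0 + L v) '' (Metric.closedBall 0 1) with hEdef
    have htσ2 : t*σ ≤ 1/2 := by nlinarith only [htσ, ht, hσ0]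
    have hG1 : 9*hh^2 + β^2 ≤ (R - η)^2 := by
      have hb1 : (8*t*Δ)^2*(1-σ)^2 = (8*t*Δ)^2 - 128*Δ^2 + 64*Δ^2*σ := by
        linear_combination (64*Δ^2*σ - 128*Δ^2) * htσ
      have htη : t*η ≤ Δ/2 := by
        nlinarith only [hησ, htσ2, hΔ, ht0]
      have h9 : hh^2 ≤ (3*Δ/4)^2 := by nlinarith only [hhΔ, hh0, hΔ]
      have h16 : 16*Δ*(t*η) ≤ 16*Δ*(Δ/2) :=
        mul_le_mul_of_nonneg_left htη (by linarith only [hΔ])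
      have m3 : 64*Δ^2*σ ≤ 64*Δ^2*(1/4) :=
        mul_le_mul_of_nonneg_left hσ4 (by positivity)
      rw [hβdef, hRdef]
      nlinarith only [hb1, h9, m3, h16, sq_nonneg η]
    have hEdeep : ∀ p ∈ E, ‖p - (x:EuclideanSpace ℝ (Fin d))‖ ≤ R - η ∧
        Δ/2 + η ≤ (inner ℝ (p - (x:EuclideanSpace ℝ (Fin d))) e : ℝ) := by
      rintro p ⟨v, hv, rfl⟩
      have hv1 : ‖v‖ ≤ 1 := by rwa [Metric.mem_closedBall, dist_zero_right] at hv
      have hpx : c0 + L v - (x:EuclideanSpace ℝ (Fin d))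
          = (2*hh) • e + (β • v + ((hh - β) * (inner ℝ e v : ℝ)) • e) := by
        rw [hc0def, hLv]; abel
      obtain ⟨hn, hi⟩ := ellipse_bounds he hh0.le hβ0.le hv1 (hh := hh) (b := β)
      constructor
      · rw [hpx]
        apply sq_le_imp_le (norm_nonneg _) (by linarith only [hηR] : (0:ℝ) ≤ R - η)
        calc ‖(2*hh) • e + (β • v + ((hh - β) * (inner ℝ e v : ℝ)) • e)‖^2
            ≤ 9*hh^2 + β^2 := hn
          _ ≤ (R-η)^2 := hG1
      · rw [hpx, ← hhdef]
        exact hi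
    have hcover : E ⊆ ⋃ w ∈ A, cubeE ε (w:EuclideanSpace ℝ (Fin d)) := by
      intro p hp
      obtain ⟨hp1, hp2⟩ := hEdeep p hp
      have hdq : dist (floE ε p) p ≤ η := hflo p
      have hqx : dist (floE ε p) (x:EuclideanSpace ℝ (Fin d)) ≤ R := by
        calc dist (floE ε p) (x:EuclideanSpace ℝ (Fin d))
            ≤ dist (floE ε p) p + dist p (x:EuclideanSpace ℝ (Fin d)) := dist_triangle _ _ _
          _ ≤ η + (R - η) := by
              apply add_le_add hdq
              rw [dist_eq_norm]; exact hp1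
          _ = R := by ring
      have hqinner : Δ/2 ≤ (inner ℝ (floE ε p - (x:EuclideanSpace ℝ (Fin d))) e : ℝ) := by
        have hsplit : floE ε p - (x:EuclideanSpace ℝ (Fin d))
            = (p - (x:EuclideanSpace ℝ (Fin d))) + (floE ε p - p) := by abel
        rw [hsplit, inner_add_left]
        have hqp : |(inner ℝ (floE ε p - p) e : ℝ)| ≤ η := by
          calc |(inner ℝ (floE ε p - p) e : ℝ)| ≤ ‖floE ε p - p‖ * ‖e‖ := abs_real_inner_le_norm _ _
            _ = dist (floE ε p) p := by rw [he, mul_one, dist_eq_norm]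
            _ ≤ η := hdq
        have := neg_le_of_abs_le hqp
        linarith only [this, hp2]
      have hqM : floE ε p ∈ M := by
        apply hfloM
        rw [dist_zero_right]
        have hpn : ‖p‖ ≤ ‖(x:EuclideanSpace ℝ (Fin d))‖ + (R - η) := by
          calc ‖p‖ = ‖(x:EuclideanSpace ℝ (Fin d)) + (p - (x:EuclideanSpace ℝ (Fin d)))‖ := by
                congr 1; abel
            _ ≤ ‖(x:EuclideanSpace ℝ (Fin d))‖ + ‖p - (x:EuclideanSpace ℝ (Fin d))‖ := norm_add_le _ _
            _ ≤ ‖(x:EuclideanSpace ℝ (Fin d))‖ + (R - η) := by linarith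
        have := hρmem _ x.2
        linarith only [this, hpn]
      have hmemA : (⟨floE ε p, hqM⟩ : ↥M) ∈ A := by
        rw [hAdef, Finset.mem_filter]
        exact ⟨Finset.mem_univ _, ⟨hqx, hqinner⟩⟩
      exact Set.mem_biUnion hmemA (floE_mem_cubeE hε p)
    set v1 : ℝ≥0∞ := volume (Metric.ball (0:EuclideanSpace ℝ (Fin d)) 1) with hv1def
    have hv1pos : 0 < v1 := Metric.measure_ball_pos _ _ one_pos
    have hv1top : v1 ≠ ⊤ := measure_ball_lt_top.ne
    have hEvol : volume E = ENNReal.ofReal (hh * β^(d-1)) * v1 := by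
      rw [hEdef]
      rw [show (fun v => c0 + L v) = ((fun z => c0 + z) ∘ (L : EuclideanSpace ℝ (Fin d) → EuclideanSpace ℝ (Fin d))) from rfl]
      rw [Set.image_comp]
      have htrans : (fun z => c0 + z) '' ((L : EuclideanSpace ℝ (Fin d) → EuclideanSpace ℝ (Fin d)) '' Metric.closedBall 0 1)
          = (fun z => -c0 + z) ⁻¹' ((L : EuclideanSpace ℝ (Fin d) → EuclideanSpace ℝ (Fin d)) '' Metric.closedBall 0 1) :=
        Set.image_add_left
      rw [htrans, measure_preimage_add, Measure.addHaar_image_linearMap, hLdet,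
        abs_of_pos (mul_pos hh0 (pow_pos hβ0 _)),
        Measure.addHaar_closedBall volume _ zero_le_one]
      rw [one_pow, ENNReal.ofReal_one, one_mul]
    have hAcard : ENNReal.ofReal (hh * β^(d-1)) * v1 ≤ (A.card : ℝ≥0∞) * ENNReal.ofReal (ε^d) := by
      calc ENNReal.ofReal (hh*β^(d-1)) * v1 = volume E := hEvol.symm
        _ ≤ volume (⋃ w ∈ A, cubeE ε (w:EuclideanSpace ℝ (Fin d))) := measure_mono hcover
        _ ≤ ∑ w ∈ A, volume (cubeE ε (w:EuclideanSpace ℝ (Fin d))) := measure_biUnion_finset_le _ _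
        _ = (A.card : ℝ≥0∞) * ENNReal.ofReal (ε^d) := by
            rw [Finset.sum_congr rfl (fun w _ => volume_cubeE hε _), Finset.sum_const,
              nsmul_eq_mul]
    have hBdisj : (↑B : Set ↥M).PairwiseDisjoint
        (fun w : ↥M => cubeE ε (w:EuclideanSpace ℝ (Fin d))) := by
      intro w1 _ w2 _ hne
      rw [Function.onFun]
      apply Set.disjoint_left.mpr
      intro q hq1 hq2
      have hl1 : isLat ε (w1:EuclideanSpace ℝ (Fin d)) := ((hMmem _).mp w1.2).1
      have hl2 : isLat ε (w2:EuclideanSpace ℝ (Fin d)) := ((hMmem _).mp w2.2).1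
      rw [cubeE_eq_fiber hε hl1] at hq1
      rw [cubeE_eq_fiber hε hl2] at hq2
      exact hne (Subtype.ext ((hq1 : floE ε q = _).symm.trans (hq2 : floE ε q = _)))
    have hBsub : ∀ w ∈ B, cubeE ε (w:EuclideanSpace ℝ (Fin d)) ⊆
        Metric.closedBall (x:EuclideanSpace ℝ (Fin d)) R₂ ∪
        Metric.closedBall (y:EuclideanSpace ℝ (Fin d)) R₂ := by
      intro w hw q hq
      have hdq : dist q (w:EuclideanSpace ℝ (Fin d)) ≤ η := by
        rw [hηdef]
        exact dist_le_of_cubeE hε hq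
      rw [hBdef, Finset.mem_union] at hw
      cases hw with
      | inl h =>
        left
        rw [Metric.mem_closedBall]
        have h2 := (hNmem x w).mp h
        calc dist q (x:EuclideanSpace ℝ (Fin d))
            ≤ dist q (w:EuclideanSpace ℝ (Fin d)) + dist (w:EuclideanSpace ℝ (Fin d)) (x:EuclideanSpace ℝ (Fin d)) := dist_triangle _ _ _
          _ ≤ η + R := add_le_add hdq h2
          _ = R₂ := by rw [hR₂def]; ring
      | inr h =>
        right
        rw [Metric.mem_closedBall]
        have h2 := (hNmem y w).mp h
        calc dist q (y:EuclideanSpace ℝ (Fin d))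
            ≤ dist q (w:EuclideanSpace ℝ (Fin d)) + dist (w:EuclideanSpace ℝ (Fin d)) (y:EuclideanSpace ℝ (Fin d)) := dist_triangle _ _ _
          _ ≤ η + R := add_le_add hdq h2
          _ = R₂ := by rw [hR₂def]; ring
    have hBcard : (B.card : ℝ≥0∞) * ENNReal.ofReal (ε^d) ≤ 2 * ENNReal.ofReal (R₂^d) * v1 := by
      calc (B.card : ℝ≥0∞) * ENNReal.ofReal (ε^d)
          = ∑ w ∈ B, volume (cubeE ε (w:EuclideanSpace ℝ (Fin d))) := by
            rw [Finset.sum_congr rfl (fun w _ => volume_cubeE hε _), Finset.sum_const,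
              nsmul_eq_mul]
        _ = volume (⋃ w ∈ B, cubeE ε (w:EuclideanSpace ℝ (Fin d))) :=
            (measure_biUnion_finset hBdisj (fun w _ => measurable_cubeE ε _)).symm
        _ ≤ volume (Metric.closedBall (x:EuclideanSpace ℝ (Fin d)) R₂ ∪
              Metric.closedBall (y:EuclideanSpace ℝ (Fin d)) R₂) :=
            measure_mono (Set.iUnion₂_subset hBsub)
        _ ≤ volume (Metric.closedBall (x:EuclideanSpace ℝ (Fin d)) R₂) +
              volume (Metric.closedBall (y:EuclideanSpace ℝ (Fin d)) R₂) := measure_union_le _ _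
        _ = 2 * ENNReal.ofReal (R₂^d) * v1 := by
            rw [Measure.addHaar_closedBall volume _ hR₂0.le,
              Measure.addHaar_closedBall volume _ hR₂0.le, finrank_euclideanSpace_fin]
            ring
    set v1r : ℝ := v1.toReal with hv1rdef
    have hv1r0 : 0 < v1r := ENNReal.toReal_pos hv1pos.ne' hv1top
    have hreal1 : hh * β^(d-1) * v1r ≤ (A.card:ℝ) * ε^d := by
      have hl : (ENNReal.ofReal (hh*β^(d-1)) * v1).toReal = hh*β^(d-1)*v1r := by
        rw [ENNReal.toReal_mul, ENNReal.toReal_ofReal (mul_pos hh0 (pow_pos hβ0 _)).le]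
      have hr : ((A.card : ℝ≥0∞) * ENNReal.ofReal (ε^d)).toReal = (A.card:ℝ) * ε^d := by
        rw [ENNReal.toReal_mul, ENNReal.toReal_ofReal (pow_pos hε _).le]
        simp
      rw [← hl, ← hr]
      apply ENNReal.toReal_mono
      · exact ENNReal.mul_ne_top (ENNReal.natCast_ne_top _) ENNReal.ofReal_ne_top
      · exact hAcard
    have hreal2 : (B.card:ℝ) * ε^d ≤ 2 * R₂^d * v1r := by
      have hl : ((B.card : ℝ≥0∞) * ENNReal.ofReal (ε^d)).toReal = (B.card:ℝ) * ε^d := by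
        rw [ENNReal.toReal_mul, ENNReal.toReal_ofReal (pow_pos hε _).le]
        simp
      have hr : ((2:ℝ≥0∞) * ENNReal.ofReal (R₂^d) * v1).toReal = 2 * R₂^d * v1r := by
        rw [ENNReal.toReal_mul, ENNReal.toReal_mul, ENNReal.toReal_ofReal (pow_pos hR₂0 _).le]
        simp [hv1rdef]
      rw [← hl, ← hr]
      apply ENNReal.toReal_mono
      · exact ENNReal.mul_ne_top (ENNReal.mul_ne_top (by simp) ENNReal.ofReal_ne_top) hv1top
      · exact hBcard
    set δ : ℝ := (2:ℝ)^(-((64:ℝ)*(d:ℝ)/t^2)) with hδdef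
    have hT : δ * (2*R₂^d) ≤ hh * β^(d-1) := by
      have ha : R₂ ≤ β * (1+3*σ) := by
        have hm0 : (0:ℝ) ≤ Δ*σ := mul_nonneg hΔ.le hσ0.le
        have hm0' : (0:ℝ) ≤ t*(Δ*σ) := mul_nonneg ht0.le hm0
        have m6 : 2*(Δ*σ) ≤ t*(Δ*σ) := mul_le_mul_of_nonneg_right ht hm0
        have m7 : (t*(Δ*σ))*σ ≤ (t*(Δ*σ))*(1/4) := mul_le_mul_of_nonneg_left hσ4 hm0'
        rw [hβdef, hR₂def, hRdef]
        nlinarith only [hησ, m6, m7, hm0, hm0']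
      have h1 : R₂^(d-1) ≤ β^(d-1) * (1+3*σ)^(d-1) := by
        rw [← mul_pow]
        exact pow_le_pow_left₀ hR₂0.le ha _
      have h2 : (1+3*σ)^(d-1) ≤ Real.exp (3*(d:ℝ)/t^2) := by
        have e1 : 1+3*σ ≤ Real.exp (3*σ) := by
          linarith only [Real.add_one_le_exp (3*σ)]
        have e2 : (1+3*σ)^(d-1) ≤ (Real.exp (3*σ))^(d-1) :=
          pow_le_pow_left₀ (by linarith only [hσ0]) e1 _
        have e3 : (Real.exp (3*σ))^(d-1) = Real.exp (((d-1:ℕ):ℝ) * (3*σ)) := by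
          rw [← Real.exp_nat_mul]
        have e4 : ((d-1:ℕ):ℝ) * (3*σ) ≤ 3*(d:ℝ)/t^2 := by
          have hc : ((d-1:ℕ):ℝ) = (d:ℝ) - 1 := by
            rw [Nat.cast_sub hd1]; simp
          rw [hc, hσdef]
          rw [div_eq_mul_one_div (3*(d:ℝ)) (t^2)]
          have : ((d:ℝ)-1) * (3*(1/t^2)) = 3*((d:ℝ)-1)*(1/t^2) := by ring
          rw [this]
          have h1t : 0 < 1/t^2 := by positivity
          linarith only [h1t]
        calc (1+3*σ)^(d-1) ≤ (Real.exp (3*σ))^(d-1) := e2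
          _ = Real.exp (((d-1:ℕ):ℝ) * (3*σ)) := e3
          _ ≤ Real.exp (3*(d:ℝ)/t^2) := Real.exp_le_exp.mpr e4
      have h3 : R₂ ≤ 9*t*Δ := by
        have m8 : 2*Δ ≤ t*Δ := mul_le_mul_of_nonneg_right ht hΔ.le
        rw [hR₂def, hRdef]
        linarith only [hηΔ4, hΔ, m8]
      have h4 : Δ ≤ 2*hh := by
        rw [hhdef]
        linarith only [hη0]
      have hp : R₂^d = R₂ * R₂^(d-1) := by
        conv_lhs => rw [show d = (d-1)+1 from (Nat.sub_add_cancel hd1).symm]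
        rw [pow_succ]
        ring
      have hchain : 2*R₂^d ≤ 36*t*Real.exp (3*(d:ℝ)/t^2) * (hh * β^(d-1)) := by
        have hs1 : 2*R₂^d = (2*R₂) * R₂^(d-1) := by rw [hp]; ring
        have hs2 : (2*R₂) * R₂^(d-1) ≤ (2*(9*t*Δ)) * (β^(d-1) * Real.exp (3*(d:ℝ)/t^2)) := by
          apply mul_le_mul (by linarith only [h3]) _ (pow_nonneg hR₂0.le _)
            (by nlinarith only [ht0, hΔ])
          calc R₂^(d-1) ≤ β^(d-1) * (1+3*σ)^(d-1) := h1
            _ ≤ β^(d-1) * Real.exp (3*(d:ℝ)/t^2) :=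
                mul_le_mul_of_nonneg_left h2 (pow_nonneg hβ0.le _)
        have hs3 : (2*(9*t*Δ)) * (β^(d-1) * Real.exp (3*(d:ℝ)/t^2))
            ≤ (2*(9*t*(2*hh))) * (β^(d-1) * Real.exp (3*(d:ℝ)/t^2)) := by
          apply mul_le_mul_of_nonneg_right _
            (mul_nonneg (pow_nonneg hβ0.le _) (Real.exp_pos _).le)
          nlinarith only [h4, ht0]
        calc 2*R₂^d = (2*R₂) * R₂^(d-1) := hs1
          _ ≤ (2*(9*t*Δ)) * (β^(d-1) * Real.exp (3*(d:ℝ)/t^2)) := hs2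
          _ ≤ (2*(9*t*(2*hh))) * (β^(d-1) * Real.exp (3*(d:ℝ)/t^2)) := hs3
          _ = 36*t*Real.exp (3*(d:ℝ)/t^2) * (hh * β^(d-1)) := by ring
      have hkn := key_numeric hd ht ht2
      have hδmul : δ * (2:ℝ)^((64:ℝ)*(d:ℝ)/t^2) = 1 := by
        rw [hδdef, ← Real.rpow_add (by norm_num : (0:ℝ) < 2)]
        norm_num
      calc δ * (2*R₂^d) ≤ δ * (36*t*Real.exp (3*(d:ℝ)/t^2) * (hh*β^(d-1))) :=
            mul_le_mul_of_nonneg_left hchain hδ0.le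
        _ ≤ δ * ((2:ℝ)^((64:ℝ)*(d:ℝ)/t^2) * (hh*β^(d-1))) := by
            apply mul_le_mul_of_nonneg_left _ hδ0.le
            apply mul_le_mul_of_nonneg_right hkn (mul_nonneg hh0.le (pow_nonneg hβ0.le _))
        _ = (δ * (2:ℝ)^((64:ℝ)*(d:ℝ)/t^2)) * (hh*β^(d-1)) := by ring
        _ = hh*β^(d-1) := by rw [hδmul]; ring
    have hABreal : δ * (B.card:ℝ) ≤ (A.card:ℝ) := by
      have hεd : (0:ℝ) < ε^d := pow_pos hε _
      have step : δ * (B.card:ℝ) * ε^d ≤ (A.card:ℝ) * ε^d := by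
        calc δ * (B.card:ℝ) * ε^d = δ * ((B.card:ℝ) * ε^d) := by ring
          _ ≤ δ * (2*R₂^d*v1r) := mul_le_mul_of_nonneg_left hreal2 hδ0.le
          _ = (δ * (2*R₂^d))*v1r := by ring
          _ ≤ (hh*β^(d-1))*v1r := mul_le_mul_of_nonneg_right hT hv1r0.le
          _ = hh*β^(d-1)*v1r := by ring
          _ ≤ (A.card:ℝ) * ε^d := hreal1
      exact le_of_mul_le_mul_right step hεd
    have hcount : A.card * Fintype.card Ω ≤
        (Finset.univ.filter fun f : Ω => sel f B hBne ∈ A).card * B.card :=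
      sel_count hAB hBne
    set n₁ : ℕ := (Finset.univ.filter fun f : Ω => sel f B hBne ∈ A).card with hn₁def
    have hΩcard : 0 < Fintype.card Ω := Fintype.card_pos
    have hBcard0 : 0 < B.card := Finset.card_pos.mpr hBne
    have hfinalreal : δ ≤ (n₁:ℝ) / (Fintype.card Ω : ℝ) := by
      rw [le_div_iff₀ (by exact_mod_cast hΩcard)]
      have h1 : (A.card:ℝ) * (Fintype.card Ω : ℝ) ≤ (n₁:ℝ) * (B.card:ℝ) := by
        exact_mod_cast hcount
      have h2 : (δ * (Fintype.card Ω:ℝ)) * (B.card:ℝ) ≤ ((n₁:ℝ) * (B.card:ℝ)) := by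
        calc (δ * (Fintype.card Ω:ℝ)) * (B.card:ℝ) = (δ * (B.card:ℝ)) * (Fintype.card Ω:ℝ) := by
              ring
          _ ≤ (A.card:ℝ) * (Fintype.card Ω:ℝ) := by
              apply mul_le_mul_of_nonneg_right hABreal (by positivity)
          _ ≤ (n₁:ℝ) * (B.card:ℝ) := h1
      have hBc : (0:ℝ) < (B.card:ℝ) := by exact_mod_cast hBcard0
      exact le_of_mul_le_mul_right h2 hBc
    rw [PMF.toOuterMeasure_map_apply]
    have hsubev : {f : Ω | sel f B hBne ∈ A} ⊆ (Φ ⁻¹' {P : Setoid ↥s | P.r x y}) := by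
      intro f hf
      have h := hevent f hf
      show (Φ f).r x y
      rw [hΦdef]
      exact h
    have hstep1 : (PMF.uniformOfFintype Ω).toOuterMeasure {f : Ω | sel f B hBne ∈ A}
        ≤ (PMF.uniformOfFintype Ω).toOuterMeasure (Φ ⁻¹' {P : Setoid ↥s | P.r x y}) :=
      (PMF.uniformOfFintype Ω).toOuterMeasure.mono hsubev
    have hstep2 : ENNReal.ofReal δ ≤
        (PMF.uniformOfFintype Ω).toOuterMeasure {f : Ω | sel f B hBne ∈ A} := by
      rw [PMF.toOuterMeasure_apply, tsum_fintype]
      have hind : ∀ f : Ω, ({f : Ω | sel f B hBne ∈ A}).indicator (PMF.uniformOfFintype Ω) f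
          = if sel f B hBne ∈ A then ((Fintype.card Ω : ℝ≥0∞))⁻¹ else 0 := by
        intro f
        rw [Set.indicator_apply]
        simp only [Set.mem_setOf_eq]
        split_ifs with hcase
        · rw [PMF.uniformOfFintype_apply]
        · rfl
      rw [Finset.sum_congr rfl (fun f _ => hind f), ← Finset.sum_filter,
        Finset.sum_const, nsmul_eq_mul]
      have h2 : ENNReal.ofReal ((n₁:ℝ)/(Fintype.card Ω:ℝ))
          = (n₁:ℝ≥0∞) * ((Fintype.card Ω:ℝ≥0∞))⁻¹ := by
        rw [ENNReal.ofReal_div_of_pos (by exact_mod_cast hΩcard), div_eq_mul_inv]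
        congr 1
        · exact ENNReal.ofReal_natCast n₁
        · congr 1
          exact ENNReal.ofReal_natCast _
      calc ENNReal.ofReal δ ≤ ENNReal.ofReal ((n₁:ℝ)/(Fintype.card Ω:ℝ)) :=
            ENNReal.ofReal_le_ofReal hfinalreal
        _ = (n₁:ℝ≥0∞) * ((Fintype.card Ω:ℝ≥0∞))⁻¹ := h2
    exact le_trans hstep2 hstep1



end MainAux


/-- There are universal constants `C, C' ≥ 1` such that for every `d ≥ 2`
and every `2 ≤ t ≤ √(2d/ln d)`, every finite subset of `ℝ^d` is
`(C·t, 2^{-C'·d/t²})`-decomposable. -/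
theorem euclidean_low_dim_decomposable :
    ∃ (C C' : ℝ), 1 ≤ C ∧ 1 ≤ C' ∧
      ∀ (d : ℕ), 2 ≤ d →
      ∀ t : ℝ, 2 ≤ t → t ≤ Real.sqrt (2 * d / Real.log d) →
      ∀ s : Finset (EuclideanSpace ℝ (Fin d)),
        IsDecomposable ↥s (C * t) ((2 : ℝ) ^ (-(C' * d / t ^ 2))) := by
  refine ⟨16, 64, by norm_num, by norm_num, ?_⟩
  intro d hd t ht htu s Δ hΔ
  by_cases hs : s.Nonempty
  · have hdr : (1:ℝ) < (d:ℝ) := by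
      have : (2:ℝ) ≤ (d:ℝ) := by exact_mod_cast hd
      linarith
    have hlogd : 0 < Real.log d := Real.log_pos hdr
    have h0 : (0:ℝ) ≤ 2*(d:ℝ)/Real.log d := by positivity
    have h1 : t^2 ≤ 2*(d:ℝ)/Real.log d := by
      have hsq := Real.sq_sqrt h0
      nlinarith [htu, Real.sqrt_nonneg (2*(d:ℝ)/Real.log d), ht]
    have ht2 : t^2 * Real.log d ≤ 2*(d:ℝ) := (le_div_iff₀ hlogd).mp h1
    exact euclid_construct hd ht ht2 hΔ s hs
  · rw [Finset.not_nonempty_iff_eq_empty] at hs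
    subst hs
    refine ⟨PMF.pure ⊥, ?_, ?_⟩
    · intro P hP x y hxy
      exact absurd x.2 (Finset.notMem_empty _)
    · intro x y hxy
      exact absurd x.2 (Finset.notMem_empty _)
end
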